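/- Let φ be an LTL formula in negation normal form and w an infinite word over 2^Ap. For every X ⊆ μ(φ) and Y ⊆ ν(φ): if w ⊨ GF(ψ[Y]_μ) for every ψ ∈ X, and w ⊨ FG(ψ[X]_ν) for every ψ ∈ Y, then X ⊆ GF_w and Y ⊆ FG_w. -/

import Mathlib

/-- LTL formulas in negation normal form over atomic propositions `Ap`. -/
inductive LTL (Ap : Type) : Type
  | tt : LTL Ap
  | ff : LTL Ap
  | atom (a : Ap) : LTL Ap
  | natom (a : Ap) : LTL Ap
  | conj (φ ψ : LTL Ap) : LTL Ap
  | disj (φ ψ : LTL Ap) : LTL Ap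
  | next (φ : LTL Ap) : LTL Ap
  | fut (φ : LTL Ap) : LTL Ap
  | glob (φ : LTL Ap) : LTL Ap
  | untl (φ ψ : LTL Ap) : LTL Ap
  | wUntl (φ ψ : LTL Ap) : LTL Ap
  | strongRel (φ ψ : LTL Ap) : LTL Ap
  | rel (φ ψ : LTL Ap) : LTL Ap

variable {Ap : Type} [DecidableEq Ap]

/-- The suffix `w_i` of an infinite word. -/
def suffix (w : ℕ → Finset Ap) (i : ℕ) : ℕ → Finset Ap := fun k => w (i + k)

/-- Standard LTL satisfaction over infinite words over `2^Ap`. -/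
def Sat : (ℕ → Finset Ap) → LTL Ap → Prop
  | _, .tt => True
  | _, .ff => False
  | w, .atom a => a ∈ w 0
  | w, .natom a => a ∉ w 0
  | w, .conj φ ψ => Sat w φ ∧ Sat w ψ
  | w, .disj φ ψ => Sat w φ ∨ Sat w ψ
  | w, .next φ => Sat (suffix w 1) φ
  | w, .fut φ => ∃ k, Sat (suffix w k) φ
  | w, .glob φ => ∀ k, Sat (suffix w k) φ
  | w, .untl φ ψ => ∃ k, Sat (suffix w k) ψ ∧ ∀ j < k, Sat (suffix w j) φ
  | w, .wUntl φ ψ =>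
      (∀ k, Sat (suffix w k) φ) ∨ (∃ k, Sat (suffix w k) ψ ∧ ∀ j < k, Sat (suffix w j) φ)
  | w, .strongRel φ ψ => ∃ k, Sat (suffix w k) φ ∧ ∀ j ≤ k, Sat (suffix w j) ψ
  | w, .rel φ ψ =>
      (∀ k, Sat (suffix w k) ψ) ∨ (∃ k, Sat (suffix w k) φ ∧ ∀ j ≤ k, Sat (suffix w j) ψ)

/-- The "after" function on a single letter `ν ∈ 2^Ap`. -/
def afLetter : LTL Ap → Finset Ap → LTL Ap
  | .tt, _ => .tt
  | .ff, _ => .ff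
  | .atom a, ν => if a ∈ ν then .tt else .ff
  | .natom a, ν => if a ∈ ν then .ff else .tt
  | .conj φ ψ, ν => .conj (afLetter φ ν) (afLetter ψ ν)
  | .disj φ ψ, ν => .disj (afLetter φ ν) (afLetter ψ ν)
  | .next φ, _ => φ
  | .fut φ, ν => .disj (afLetter φ ν) (.fut φ)
  | .glob φ, ν => .conj (afLetter φ ν) (.glob φ)
  | .untl φ ψ, ν => .disj (afLetter ψ ν) (.conj (afLetter φ ν) (.untl φ ψ))
  | .wUntl φ ψ, ν => .disj (afLetter ψ ν) (.conj (afLetter φ ν) (.wUntl φ ψ))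
  | .strongRel φ ψ, ν => .conj (afLetter ψ ν) (.disj (afLetter φ ν) (.strongRel φ ψ))
  | .rel φ ψ, ν => .conj (afLetter ψ ν) (.disj (afLetter φ ν) (.rel φ ψ))

/-- The "after" function extended to finite words. -/
def af : LTL Ap → List (Finset Ap) → LTL Ap
  | φ, [] => φ
  | φ, ν :: u => af (afLetter φ ν) u

/-- The finite prefix `w_{0i} = w[0]⋯w[i-1]` of an infinite word. -/
def prefixWord (w : ℕ → Finset Ap) (i : ℕ) : List (Finset Ap) :=
  (List.range i).map w

/-- The finite infix `w_{ij} = w[i]⋯w[j-1]` of an infinite word. -/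
def infixWord (w : ℕ → Finset Ap) (i j : ℕ) : List (Finset Ap) :=
  (List.range (j - i)).map (fun k => w (i + k))

/-- Evaluation of a formula as a propositional formula, where every maximal
proper subformula (root not `∧`/`∨`) is treated as a propositional variable
whose truth value is given by the assignment `v`. -/
def propEval (v : LTL Ap → Prop) : LTL Ap → Prop
  | .tt => True
  | .ff => False
  | .conj φ ψ => propEval v φ ∧ propEval v ψ
  | .disj φ ψ => propEval v φ ∨ propEval v ψ
  | φ => v φ

/-- Propositional equivalence `φ ≡_P ψ`. -/
def propEquiv (φ ψ : LTL Ap) : Prop := ∀ v, propEval v φ ↔ propEval v ψ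

/-- The set of subformulas of a formula (including itself). -/
def subf : LTL Ap → Set (LTL Ap)
  | .tt => {LTL.tt}
  | .ff => {LTL.ff}
  | .atom a => {LTL.atom a}
  | .natom a => {LTL.natom a}
  | .conj φ ψ => insert (.conj φ ψ) (subf φ ∪ subf ψ)
  | .disj φ ψ => insert (.disj φ ψ) (subf φ ∪ subf ψ)
  | .next φ => insert (.next φ) (subf φ)
  | .fut φ => insert (.fut φ) (subf φ)
  | .glob φ => insert (.glob φ) (subf φ)
  | .untl φ ψ => insert (.untl φ ψ) (subf φ ∪ subf ψ)
  | .wUntl φ ψ => insert (.wUntl φ ψ) (subf φ ∪ subf ψ)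
  | .strongRel φ ψ => insert (.strongRel φ ψ) (subf φ ∪ subf ψ)
  | .rel φ ψ => insert (.rel φ ψ) (subf φ ∪ subf ψ)

/-- A formula is proper if its root is not a conjunction or a disjunction. -/
def isProper : LTL Ap → Prop
  | .conj _ _ => False
  | .disj _ _ => False
  | _ => True

/-- The set of proper subformulas of `φ`. -/
def properSubf (φ : LTL Ap) : Set (LTL Ap) := {ψ | ψ ∈ subf φ ∧ isProper ψ}

/-- Formulas whose root is a least-fixed-point operator (`F`, `U`, `M`). -/
def isMu : LTL Ap → Prop
  | .fut _ => True
  | .untl _ _ => True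
  | .strongRel _ _ => True
  | _ => False

/-- Formulas whose root is a greatest-fixed-point operator (`G`, `W`, `R`). -/
def isNu : LTL Ap → Prop
  | .glob _ => True
  | .wUntl _ _ => True
  | .rel _ _ => True
  | _ => False

/-- `μ(φ)`: subformulas of `φ` of the form `Fψ`, `ψ₁Uψ₂`, `ψ₁Mψ₂`. -/
def muSet (φ : LTL Ap) : Set (LTL Ap) := {ψ | ψ ∈ subf φ ∧ isMu ψ}

/-- `ν(φ)`: subformulas of `φ` of the form `Gψ`, `ψ₁Wψ₂`, `ψ₁Rψ₂`. -/
def nuSet (φ : LTL Ap) : Set (LTL Ap) := {ψ | ψ ∈ subf φ ∧ isNu ψ}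

/-- `GF_w = {ψ ∈ μ(φ) | w ⊨ GFψ}`. -/
def GFSet (φ : LTL Ap) (w : ℕ → Finset Ap) : Set (LTL Ap) :=
  {ψ | ψ ∈ muSet φ ∧ Sat w (.glob (.fut ψ))}

/-- `F_w = {ψ ∈ μ(φ) | w ⊨ Fψ}`. -/
def FSet (φ : LTL Ap) (w : ℕ → Finset Ap) : Set (LTL Ap) :=
  {ψ | ψ ∈ muSet φ ∧ Sat w (.fut ψ)}

/-- `FG_w = {ψ ∈ ν(φ) | w ⊨ FGψ}`. -/
def FGSet (φ : LTL Ap) (w : ℕ → Finset Ap) : Set (LTL Ap) :=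
  {ψ | ψ ∈ nuSet φ ∧ Sat w (.fut (.glob ψ))}

/-- `G_w = {ψ ∈ ν(φ) | w ⊨ Gψ}`. -/
def GSet (φ : LTL Ap) (w : ℕ → Finset Ap) : Set (LTL Ap) :=
  {ψ | ψ ∈ nuSet φ ∧ Sat w (.glob ψ)}

open scoped Classical in
/-- `φ[X]_ν`. -/
noncomputable def evalNu (X : Set (LTL Ap)) : LTL Ap → LTL Ap
  | .tt => .tt
  | .ff => .ff
  | .atom a => .atom a
  | .natom a => .natom a
  | .conj φ ψ => .conj (evalNu X φ) (evalNu X ψ)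
  | .disj φ ψ => .disj (evalNu X φ) (evalNu X ψ)
  | .next φ => .next (evalNu X φ)
  | .glob φ => .glob (evalNu X φ)
  | .wUntl φ ψ => .wUntl (evalNu X φ) (evalNu X ψ)
  | .rel φ ψ => .rel (evalNu X φ) (evalNu X ψ)
  | .fut φ => if LTL.fut φ ∈ X then .tt else .ff
  | .untl φ ψ => if LTL.untl φ ψ ∈ X then .wUntl (evalNu X φ) (evalNu X ψ) else .ff
  | .strongRel φ ψ => if LTL.strongRel φ ψ ∈ X then .rel (evalNu X φ) (evalNu X ψ) else .ff

open scoped Classical in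
/-- `φ[Y]_μ`. -/
noncomputable def evalMu (Y : Set (LTL Ap)) : LTL Ap → LTL Ap
  | .tt => .tt
  | .ff => .ff
  | .atom a => .atom a
  | .natom a => .natom a
  | .conj φ ψ => .conj (evalMu Y φ) (evalMu Y ψ)
  | .disj φ ψ => .disj (evalMu Y φ) (evalMu Y ψ)
  | .next φ => .next (evalMu Y φ)
  | .fut φ => .fut (evalMu Y φ)
  | .untl φ ψ => .untl (evalMu Y φ) (evalMu Y ψ)
  | .strongRel φ ψ => .strongRel (evalMu Y φ) (evalMu Y ψ)
  | .glob φ => if LTL.glob φ ∈ Y then .tt else .ff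
  | .wUntl φ ψ => if LTL.wUntl φ ψ ∈ Y then .tt else .untl (evalMu Y φ) (evalMu Y ψ)
  | .rel φ ψ => if LTL.rel φ ψ ∈ Y then .tt else .strongRel (evalMu Y φ) (evalMu Y ψ)

/-- Concatenation `u·w` of a finite word and an infinite word. -/
def wordAppend (u : List (Finset Ap)) (w : ℕ → Finset Ap) : ℕ → Finset Ap :=
  fun i => if h : i < u.length then u.get ⟨i, h⟩ else w (i - u.length)

/-- The smallest set of formulas containing `tt`, `ff` and all elements of `S`
that is closed under conjunction and disjunction. -/
inductive PosBool (S : Set (LTL Ap)) : LTL Ap → Prop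
  | tt : PosBool S .tt
  | ff : PosBool S .ff
  | base {ψ : LTL Ap} : ψ ∈ S → PosBool S ψ
  | conj {φ ψ : LTL Ap} : PosBool S φ → PosBool S ψ → PosBool S (.conj φ ψ)
  | disj {φ ψ : LTL Ap} : PosBool S φ → PosBool S ψ → PosBool S (.disj φ ψ)

/-- `Reach(φ)`: the set of `≡_P`-equivalence classes of the formulas `af(φ,u)`
over all finite words `u`. -/
def Reach (φ : LTL Ap) : Set (Set (LTL Ap)) :=
  {C | ∃ u : List (Finset Ap), C = {ψ | propEquiv ψ (af φ u)}}

/-- The fragment `μLTL`: only `tt`, `ff`, literals, `∧`, `∨`, `X`, `F`, `U`, `M`. -/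
def inMuLTL : LTL Ap → Prop
  | .tt => True
  | .ff => True
  | .atom _ => True
  | .natom _ => True
  | .conj φ ψ => inMuLTL φ ∧ inMuLTL ψ
  | .disj φ ψ => inMuLTL φ ∧ inMuLTL ψ
  | .next φ => inMuLTL φ
  | .fut φ => inMuLTL φ
  | .untl φ ψ => inMuLTL φ ∧ inMuLTL ψ
  | .strongRel φ ψ => inMuLTL φ ∧ inMuLTL ψ
  | .glob _ => False
  | .wUntl _ _ => False
  | .rel _ _ => False

/-- The fragment `νLTL`: only `tt`, `ff`, literals, `∧`, `∨`, `X`, `G`, `W`, `R`. -/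
def inNuLTL : LTL Ap → Prop
  | .tt => True
  | .ff => True
  | .atom _ => True
  | .natom _ => True
  | .conj φ ψ => inNuLTL φ ∧ inNuLTL ψ
  | .disj φ ψ => inNuLTL φ ∧ inNuLTL ψ
  | .next φ => inNuLTL φ
  | .glob φ => inNuLTL φ
  | .wUntl φ ψ => inNuLTL φ ∧ inNuLTL ψ
  | .rel φ ψ => inNuLTL φ ∧ inNuLTL ψ
  | .fut _ => False
  | .untl _ _ => False
  | .strongRel _ _ => False

section Stmt16Aux

variable {Ap : Type} [DecidableEq Ap]

lemma suffix_suffix (w : ℕ → Finset Ap) (i j : ℕ) :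
    suffix (suffix w i) j = suffix w (i + j) := by
  funext k; simp [suffix, Nat.add_assoc]

lemma suffix_zero (w : ℕ → Finset Ap) : suffix w 0 = w := by
  funext k; simp [suffix]

/-- size of a formula -/
def sz : LTL Ap → ℕ
  | .tt => 1
  | .ff => 1
  | .atom _ => 1
  | .natom _ => 1
  | .conj φ ψ => sz φ + sz ψ + 1
  | .disj φ ψ => sz φ + sz ψ + 1
  | .next φ => sz φ + 1
  | .fut φ => sz φ + 1
  | .glob φ => sz φ + 1
  | .untl φ ψ => sz φ + sz ψ + 1
  | .wUntl φ ψ => sz φ + sz ψ + 1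
  | .strongRel φ ψ => sz φ + sz ψ + 1
  | .rel φ ψ => sz φ + sz ψ + 1

lemma sz_pos (ψ : LTL Ap) : 0 < sz ψ := by cases ψ <;> simp [sz]

lemma subf_finite (φ : LTL Ap) : (subf φ).Finite := by
  induction φ with
  | tt => exact Set.finite_singleton _
  | ff => exact Set.finite_singleton _
  | atom a => exact Set.finite_singleton _
  | natom a => exact Set.finite_singleton _
  | conj φ ψ ih1 ih2 => exact (ih1.union ih2).insert _
  | disj φ ψ ih1 ih2 => exact (ih1.union ih2).insert _
  | next φ ih => exact ih.insert _
  | fut φ ih => exact ih.insert _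
  | glob φ ih => exact ih.insert _
  | untl φ ψ ih1 ih2 => exact (ih1.union ih2).insert _
  | wUntl φ ψ ih1 ih2 => exact (ih1.union ih2).insert _
  | strongRel φ ψ ih1 ih2 => exact (ih1.union ih2).insert _
  | rel φ ψ ih1 ih2 => exact (ih1.union ih2).insert _

lemma sat_gf_iff (w : ℕ → Finset Ap) (χ : LTL Ap) :
    Sat w (LTL.glob (LTL.fut χ)) ↔ ∀ k, ∃ m, Sat (suffix w (k + m)) χ := by
  simp only [Sat, suffix_suffix]

lemma sat_fg_iff (w : ℕ → Finset Ap) (χ : LTL Ap) :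
    Sat w (LTL.fut (LTL.glob χ)) ↔ ∃ i, ∀ k, Sat (suffix w (i + k)) χ := by
  simp only [Sat, suffix_suffix]

lemma gf_suffix {v : ℕ → Finset Ap} {χ : LTL Ap}
    (h : Sat v (LTL.glob (LTL.fut χ))) (j : ℕ) :
    Sat (suffix v j) (LTL.glob (LTL.fut χ)) := by
  rw [sat_gf_iff] at h ⊢
  intro k
  obtain ⟨m, hm⟩ := h (j + k)
  refine ⟨m, ?_⟩
  rw [suffix_suffix, ← Nat.add_assoc]
  exact hm

/-- Soundness of `evalMu`: if all relevant elements of `Y` hold globally,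
then `ψ[Y]_μ` implies `ψ`. -/
lemma muSound (Y : Set (LTL Ap)) :
    ∀ (ψ : LTL Ap) (v : ℕ → Finset Ap),
      (∀ χ ∈ Y, sz χ ≤ sz ψ → ∀ k, Sat (suffix v k) χ) →
      Sat v (evalMu Y ψ) → Sat v ψ := by
  intro ψ
  induction ψ with
  | tt => intro v _ _; trivial
  | ff => intro v _ h; exact h
  | atom a => intro v _ h; exact h
  | natom a => intro v _ h; exact h
  | conj φ ψ ih1 ih2 =>
    intro v hyp h
    simp only [evalMu, Sat] at h ⊢
    exact ⟨ih1 v (fun χ hχ hs k => hyp χ hχ (by simp only [sz]; omega) k) h.1,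
           ih2 v (fun χ hχ hs k => hyp χ hχ (by simp only [sz]; omega) k) h.2⟩
  | disj φ ψ ih1 ih2 =>
    intro v hyp h
    simp only [evalMu, Sat] at h ⊢
    exact h.imp (ih1 v (fun χ hχ hs k => hyp χ hχ (by simp only [sz]; omega) k))
                (ih2 v (fun χ hχ hs k => hyp χ hχ (by simp only [sz]; omega) k))
  | next φ ih =>
    intro v hyp h
    simp only [evalMu, Sat] at h ⊢
    exact ih _ (fun χ hχ hs k => by
      rw [suffix_suffix]; exact hyp χ hχ (by simp only [sz]; omega) _) h
  | fut φ ih =>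
    intro v hyp h
    simp only [evalMu, Sat] at h ⊢
    obtain ⟨k, h⟩ := h
    exact ⟨k, ih _ (fun χ hχ hs j => by
      rw [suffix_suffix]; exact hyp χ hχ (by simp only [sz]; omega) _) h⟩
  | untl φ ψ ih1 ih2 =>
    intro v hyp h
    simp only [evalMu, Sat] at h ⊢
    obtain ⟨k, h2, h1⟩ := h
    refine ⟨k, ih2 _ (fun χ hχ hs j => by
      rw [suffix_suffix]; exact hyp χ hχ (by simp only [sz]; omega) _) h2,
      fun j hj => ih1 _ (fun χ hχ hs j' => by
      rw [suffix_suffix]; exact hyp χ hχ (by simp only [sz]; omega) _) (h1 j hj)⟩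
  | strongRel φ ψ ih1 ih2 =>
    intro v hyp h
    simp only [evalMu, Sat] at h ⊢
    obtain ⟨k, h1, h2⟩ := h
    refine ⟨k, ih1 _ (fun χ hχ hs j => by
      rw [suffix_suffix]; exact hyp χ hχ (by simp only [sz]; omega) _) h1,
      fun j hj => ih2 _ (fun χ hχ hs j' => by
      rw [suffix_suffix]; exact hyp χ hχ (by simp only [sz]; omega) _) (h2 j hj)⟩
  | glob φ ih =>
    intro v hyp h
    by_cases hmem : LTL.glob φ ∈ Y
    · have h0 := hyp _ hmem le_rfl 0
      rwa [suffix_zero] at h0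
    · simp only [evalMu, hmem, if_neg, ↓reduceIte, Sat] at h
  | wUntl φ ψ ih1 ih2 =>
    intro v hyp h
    by_cases hmem : LTL.wUntl φ ψ ∈ Y
    · have h0 := hyp _ hmem le_rfl 0
      rwa [suffix_zero] at h0
    · simp only [evalMu, hmem, if_neg, Sat] at h
      obtain ⟨k, h2, h1⟩ := h
      refine Or.inr ⟨k, ih2 _ (fun χ hχ hs j => by
        rw [suffix_suffix]; exact hyp χ hχ (by simp only [sz]; omega) _) h2,
        fun j hj => ih1 _ (fun χ hχ hs j' => by
        rw [suffix_suffix]; exact hyp χ hχ (by simp only [sz]; omega) _) (h1 j hj)⟩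
  | rel φ ψ ih1 ih2 =>
    intro v hyp h
    by_cases hmem : LTL.rel φ ψ ∈ Y
    · have h0 := hyp _ hmem le_rfl 0
      rwa [suffix_zero] at h0
    · simp only [evalMu, hmem, if_neg, Sat] at h
      obtain ⟨k, h1, h2⟩ := h
      refine Or.inr ⟨k, ih1 _ (fun χ hχ hs j => by
        rw [suffix_suffix]; exact hyp χ hχ (by simp only [sz]; omega) _) h1,
        fun j hj => ih2 _ (fun χ hχ hs j' => by
        rw [suffix_suffix]; exact hyp χ hχ (by simp only [sz]; omega) _) (h2 j hj)⟩

/-- Soundness of `evalNu`: if all relevant elements of `X` hold infinitely often,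
then `ψ[X]_ν` implies `ψ`. -/
lemma nuSound (X : Set (LTL Ap)) :
    ∀ (ψ : LTL Ap) (v : ℕ → Finset Ap),
      (∀ χ ∈ X, sz χ ≤ sz ψ → Sat v (LTL.glob (LTL.fut χ))) →
      Sat v (evalNu X ψ) → Sat v ψ := by
  intro ψ
  induction ψ with
  | tt => intro v _ _; trivial
  | ff => intro v _ h; exact h
  | atom a => intro v _ h; exact h
  | natom a => intro v _ h; exact h
  | conj φ ψ ih1 ih2 =>
    intro v hyp h
    simp only [evalNu, Sat] at h ⊢
    exact ⟨ih1 v (fun χ hχ hs => hyp χ hχ (by simp only [sz]; omega)) h.1,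
           ih2 v (fun χ hχ hs => hyp χ hχ (by simp only [sz]; omega)) h.2⟩
  | disj φ ψ ih1 ih2 =>
    intro v hyp h
    simp only [evalNu, Sat] at h ⊢
    exact h.imp (ih1 v (fun χ hχ hs => hyp χ hχ (by simp only [sz]; omega)))
                (ih2 v (fun χ hχ hs => hyp χ hχ (by simp only [sz]; omega)))
  | next φ ih =>
    intro v hyp h
    simp only [evalNu, Sat] at h ⊢
    exact ih _ (fun χ hχ hs => gf_suffix (hyp χ hχ (by simp only [sz]; omega)) _) h
  | glob φ ih =>
    intro v hyp h
    simp only [evalNu, Sat] at h ⊢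
    intro k
    exact ih _ (fun χ hχ hs => gf_suffix (hyp χ hχ (by simp only [sz]; omega)) _) (h k)
  | wUntl φ ψ ih1 ih2 =>
    intro v hyp h
    simp only [evalNu, Sat] at h ⊢
    refine h.imp (fun hg k => ih1 _ (fun χ hχ hs =>
        gf_suffix (hyp χ hχ (by simp only [sz]; omega)) _) (hg k)) ?_
    rintro ⟨k, h2, h1⟩
    exact ⟨k, ih2 _ (fun χ hχ hs =>
        gf_suffix (hyp χ hχ (by simp only [sz]; omega)) _) h2,
      fun j hj => ih1 _ (fun χ hχ hs =>
        gf_suffix (hyp χ hχ (by simp only [sz]; omega)) _) (h1 j hj)⟩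
  | rel φ ψ ih1 ih2 =>
    intro v hyp h
    simp only [evalNu, Sat] at h ⊢
    refine h.imp (fun hg k => ih2 _ (fun χ hχ hs =>
        gf_suffix (hyp χ hχ (by simp only [sz]; omega)) _) (hg k)) ?_
    rintro ⟨k, h1, h2⟩
    exact ⟨k, ih1 _ (fun χ hχ hs =>
        gf_suffix (hyp χ hχ (by simp only [sz]; omega)) _) h1,
      fun j hj => ih2 _ (fun χ hχ hs =>
        gf_suffix (hyp χ hχ (by simp only [sz]; omega)) _) (h2 j hj)⟩
  | fut φ ih =>
    intro v hyp h
    by_cases hmem : LTL.fut φ ∈ X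
    · have h0 := (sat_gf_iff v _).mp (hyp _ hmem le_rfl) 0
      obtain ⟨m, hm⟩ := h0
      rw [Nat.zero_add] at hm
      simp only [Sat] at hm ⊢
      obtain ⟨j, hj⟩ := hm
      rw [suffix_suffix] at hj
      exact ⟨m + j, hj⟩
    · simp only [evalNu, hmem, if_neg, ↓reduceIte, Sat] at h
  | untl φ ψ ih1 ih2 =>
    intro v hyp h
    by_cases hmem : LTL.untl φ ψ ∈ X
    · simp only [evalNu, hmem, if_pos, Sat] at h
      rcases h with hg | ⟨k, h2, h1⟩
      · -- φ holds everywhere; use GF(φ U ψ) to find a ψ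
        have hφ : ∀ k, Sat (suffix v k) φ := fun k =>
          ih1 _ (fun χ hχ hs =>
            gf_suffix (hyp χ hχ (by simp only [sz]; omega)) _) (hg k)
        obtain ⟨m, hm⟩ := (sat_gf_iff v _).mp (hyp _ hmem le_rfl) 0
        rw [Nat.zero_add] at hm
        obtain ⟨j, hψ, _⟩ := hm
        rw [suffix_suffix] at hψ
        exact ⟨m + j, hψ, fun i _ => hφ i⟩
      · exact ⟨k, ih2 _ (fun χ hχ hs =>
            gf_suffix (hyp χ hχ (by simp only [sz]; omega)) _) h2,
          fun j hj => ih1 _ (fun χ hχ hs =>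
            gf_suffix (hyp χ hχ (by simp only [sz]; omega)) _) (h1 j hj)⟩
    · simp only [evalNu, hmem, if_neg, ↓reduceIte, Sat] at h
  | strongRel φ ψ ih1 ih2 =>
    intro v hyp h
    by_cases hmem : LTL.strongRel φ ψ ∈ X
    · simp only [evalNu, hmem, if_pos, Sat] at h
      rcases h with hg | ⟨k, h1, h2⟩
      · have hψ : ∀ k, Sat (suffix v k) ψ := fun k =>
          ih2 _ (fun χ hχ hs =>
            gf_suffix (hyp χ hχ (by simp only [sz]; omega)) _) (hg k)
        obtain ⟨m, hm⟩ := (sat_gf_iff v _).mp (hyp _ hmem le_rfl) 0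
        rw [Nat.zero_add] at hm
        obtain ⟨j, hφ, _⟩ := hm
        rw [suffix_suffix] at hφ
        exact ⟨m + j, hφ, fun i _ => hψ i⟩
      · exact ⟨k, ih1 _ (fun χ hχ hs =>
            gf_suffix (hyp χ hχ (by simp only [sz]; omega)) _) h1,
          fun j hj => ih2 _ (fun χ hχ hs =>
            gf_suffix (hyp χ hχ (by simp only [sz]; omega)) _) (h2 j hj)⟩
    · simp only [evalNu, hmem, if_neg, ↓reduceIte, Sat] at h

/-- Version of `muSound` for μ-rooted formulas with a *strict* size bound. -/
lemma muSound' (Y : Set (LTL Ap)) (ψ : LTL Ap) (hμ : isMu ψ) (v : ℕ → Finset Ap)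
    (hyp : ∀ χ ∈ Y, sz χ < sz ψ → ∀ k, Sat (suffix v k) χ)
    (h : Sat v (evalMu Y ψ)) : Sat v ψ := by
  cases ψ with
  | fut φ =>
    simp only [evalMu, Sat] at h ⊢
    obtain ⟨k, h⟩ := h
    exact ⟨k, muSound Y φ _ (fun χ hχ hs j => by
      rw [suffix_suffix]; exact hyp χ hχ (by simp only [sz]; omega) _) h⟩
  | untl φ ψ =>
    simp only [evalMu, Sat] at h ⊢
    obtain ⟨k, h2, h1⟩ := h
    exact ⟨k, muSound Y ψ _ (fun χ hχ hs j => by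
        rw [suffix_suffix]; exact hyp χ hχ (by simp only [sz]; omega) _) h2,
      fun j hj => muSound Y φ _ (fun χ hχ hs j' => by
        rw [suffix_suffix]; exact hyp χ hχ (by simp only [sz]; omega) _) (h1 j hj)⟩
  | strongRel φ ψ =>
    simp only [evalMu, Sat] at h ⊢
    obtain ⟨k, h1, h2⟩ := h
    exact ⟨k, muSound Y φ _ (fun χ hχ hs j => by
        rw [suffix_suffix]; exact hyp χ hχ (by simp only [sz]; omega) _) h1,
      fun j hj => muSound Y ψ _ (fun χ hχ hs j' => by
        rw [suffix_suffix]; exact hyp χ hχ (by simp only [sz]; omega) _) (h2 j hj)⟩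
  | tt => trivial
  | ff => simp [isMu] at hμ
  | atom a => simp [isMu] at hμ
  | natom a => simp [isMu] at hμ
  | conj φ ψ => simp [isMu] at hμ
  | disj φ ψ => simp [isMu] at hμ
  | next φ => simp [isMu] at hμ
  | glob φ => simp [isMu] at hμ
  | wUntl φ ψ => simp [isMu] at hμ
  | rel φ ψ => simp [isMu] at hμ

/-- Version of `nuSound` for ν-rooted formulas with a *strict* size bound. -/
lemma nuSound' (X : Set (LTL Ap)) (ψ : LTL Ap) (hν : isNu ψ) (v : ℕ → Finset Ap)
    (hyp : ∀ χ ∈ X, sz χ < sz ψ → Sat v (LTL.glob (LTL.fut χ)))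
    (h : Sat v (evalNu X ψ)) : Sat v ψ := by
  cases ψ with
  | glob φ =>
    simp only [evalNu, Sat] at h ⊢
    intro k
    exact nuSound X φ _ (fun χ hχ hs =>
      gf_suffix (hyp χ hχ (by simp only [sz]; omega)) _) (h k)
  | wUntl φ ψ =>
    simp only [evalNu, Sat] at h ⊢
    refine h.imp (fun hg k => nuSound X φ _ (fun χ hχ hs =>
        gf_suffix (hyp χ hχ (by simp only [sz]; omega)) _) (hg k)) ?_
    rintro ⟨k, h2, h1⟩
    exact ⟨k, nuSound X ψ _ (fun χ hχ hs =>
        gf_suffix (hyp χ hχ (by simp only [sz]; omega)) _) h2,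
      fun j hj => nuSound X φ _ (fun χ hχ hs =>
        gf_suffix (hyp χ hχ (by simp only [sz]; omega)) _) (h1 j hj)⟩
  | rel φ ψ =>
    simp only [evalNu, Sat] at h ⊢
    refine h.imp (fun hg k => nuSound X ψ _ (fun χ hχ hs =>
        gf_suffix (hyp χ hχ (by simp only [sz]; omega)) _) (hg k)) ?_
    rintro ⟨k, h1, h2⟩
    exact ⟨k, nuSound X φ _ (fun χ hχ hs =>
        gf_suffix (hyp χ hχ (by simp only [sz]; omega)) _) h1,
      fun j hj => nuSound X ψ _ (fun χ hχ hs =>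
        gf_suffix (hyp χ hχ (by simp only [sz]; omega)) _) (h2 j hj)⟩
  | tt => trivial
  | ff => simp [isNu] at hν
  | atom a => simp [isNu] at hν
  | natom a => simp [isNu] at hν
  | conj φ ψ => simp [isNu] at hν
  | disj φ ψ => simp [isNu] at hν
  | next φ => simp [isNu] at hν
  | fut φ => simp [isNu] at hν
  | untl φ ψ => simp [isNu] at hν
  | strongRel φ ψ => simp [isNu] at hν

end Stmt16Aux

/-- soundness of the mutual rely/guarantee check:
if `w ⊨ GF(ψ[Y]_μ)` for all `ψ ∈ X` and `w ⊨ FG(ψ[X]_ν)` for all `ψ ∈ Y`,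
then `X ⊆ GF_w` and `Y ⊆ FG_w`. -/
theorem stmt16 {Ap : Type} [DecidableEq Ap] [Fintype Ap]
    (φ : LTL Ap) (w : ℕ → Finset Ap) (X Y : Set (LTL Ap))
    (hX : X ⊆ muSet φ) (hY : Y ⊆ nuSet φ)
    (h1 : ∀ ψ ∈ X, Sat w (LTL.glob (LTL.fut (evalMu Y ψ))))
    (h2 : ∀ ψ ∈ Y, Sat w (LTL.fut (LTL.glob (evalNu X ψ)))) :
    X ⊆ GFSet φ w ∧ Y ⊆ FGSet φ w := by
  classical
  have main : ∀ n, ∀ ψ : LTL Ap, sz ψ ≤ n →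
      (ψ ∈ X → ∀ k, ∃ m, Sat (suffix w (k + m)) ψ) ∧
      (ψ ∈ Y → ∃ i, ∀ k, Sat (suffix w (i + k)) ψ) := by
    intro n
    induction n with
    | zero => intro ψ hs; exact absurd hs (by have := sz_pos ψ; omega)
    | succ n ih =>
      intro ψ hs
      constructor
      · intro hx
        have hμ : isMu ψ := (hX hx).2
        have hgf := (sat_gf_iff w _).mp (h1 ψ hx)
        have hchoice : ∀ χ : LTL Ap, ∃ i,
            (χ ∈ Y ∧ sz χ < sz ψ) → ∀ k, Sat (suffix w (i + k)) χ := by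
          intro χ
          by_cases hχ : χ ∈ Y ∧ sz χ < sz ψ
          · obtain ⟨i, hi⟩ := (ih χ (by omega)).2 hχ.1
            exact ⟨i, fun _ => hi⟩
          · exact ⟨0, fun h => absurd h hχ⟩
        choose g hg using hchoice
        have hfin : {χ : LTL Ap | χ ∈ Y ∧ sz χ < sz ψ}.Finite :=
          (subf_finite φ).subset (fun χ hχ => (hY hχ.1).1)
        set N := hfin.toFinset.sup g with hNdef
        have hN : ∀ χ, (χ ∈ Y ∧ sz χ < sz ψ) → ∀ j, N ≤ j → Sat (suffix w j) χ := by
          intro χ hχ j hj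
          have hgχ : g χ ≤ N := Finset.le_sup (hfin.mem_toFinset.mpr hχ)
          have := hg χ hχ (j - g χ)
          rwa [show g χ + (j - g χ) = j by omega] at this
        intro k
        obtain ⟨m, hm⟩ := hgf (max k N)
        refine ⟨max k N + m - k, ?_⟩
        rw [show k + (max k N + m - k) = max k N + m by omega]
        refine muSound' Y ψ hμ (suffix w (max k N + m)) ?_ hm
        intro χ hχ hsz j
        rw [suffix_suffix]
        exact hN χ ⟨hχ, hsz⟩ _ (by omega)
      · intro hy
        have hν : isNu ψ := (hY hy).2
        obtain ⟨i, hi⟩ := (sat_fg_iff w _).mp (h2 ψ hy)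
        refine ⟨i, fun k => ?_⟩
        refine nuSound' X ψ hν (suffix w (i + k)) ?_ (hi k)
        intro χ hχ hsz
        have hgfχ := (ih χ (by omega)).1 hχ
        rw [sat_gf_iff]
        intro a
        obtain ⟨b, hb⟩ := hgfχ (i + k + a)
        refine ⟨b, ?_⟩
        rw [suffix_suffix, show i + k + (a + b) = i + k + a + b from by omega]
        exact hb
  constructor
  · intro ψ hx
    exact ⟨hX hx, (sat_gf_iff w ψ).mpr ((main (sz ψ) ψ le_rfl).1 hx)⟩
  · intro ψ hy
    exact ⟨hY hy, (sat_fg_iff w ψ).mpr ((main (sz ψ) ψ le_rfl).2 hy)⟩
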